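/- For each agent i, the average over all agents j of agent i's value of the allocation obtained by swapping i's bundle with j's equals agent i's average value over all owners: Σ_{j∈N} V_i(π^{i↔j}) = Σ_{a∈A} Σ_{j∈N} V_i(j,a) holds whenever π is a complete allocation; consequently, PROP-Ave_i is an upper bound on the extended maximin share EMMS_i. -/

import Mathlib

open Finset

noncomputable section

lemma perm_point_sum {N : Type*} [Fintype N] [DecidableEq N] (g : N → ℝ) (b : N) :
    (Fintype.card N : ℝ) * ∑ σ : Equiv.Perm N, g (σ b) =
      (Fintype.card (Equiv.Perm N) : ℝ) * ∑ j, g j := by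
  have h1 : ∀ b' : N, ∑ σ : Equiv.Perm N, g (σ b') = ∑ σ : Equiv.Perm N, g (σ b) := by
    intro b'
    apply Fintype.sum_equiv (Equiv.mulRight (Equiv.swap b b'))
      (fun σ => g (σ b')) (fun σ => g (σ b))
    intro σ
    simp [Equiv.Perm.mul_apply, Equiv.swap_apply_left]
  have h2 : ∑ b' : N, ∑ σ : Equiv.Perm N, g (σ b') =
      (Fintype.card N : ℝ) * ∑ σ : Equiv.Perm N, g (σ b) := by
    rw [Finset.sum_congr rfl (fun b' _ => h1 b'), Finset.sum_const, Finset.card_univ,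
      nsmul_eq_mul]
  rw [← h2, Finset.sum_comm]
  have h3 : ∀ σ : Equiv.Perm N, ∑ b' : N, g (σ b') = ∑ j, g j := fun σ =>
    Equiv.sum_comp σ g
  rw [Finset.sum_congr rfl (fun σ _ => h3 σ), Finset.sum_const, Finset.card_univ,
    nsmul_eq_mul]

/-- PROP-Ave is an upper bound on the extended maximin share: for each
agent `i` and every partition of the items into `n` (ordered) bundles — encoded by a map
`π₀` sending each item to the index of its bundle — the worst allocation of that partition
over all permutations of the bundles gives agent `i` at most
`PROP-Ave_i = (1/n)·Σ_a Σ_j V_i(j,a)`.  Consequently `EMMS_i ≤ PROP-Ave_i`. -/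
theorem emms_le_prop_ave {α N : Type*} [Fintype α] [Fintype N] [DecidableEq N] [Nonempty N]
    (V : N → N → α → ℝ) :
    ∀ (i : N) (π₀ : α → N),
      (univ : Finset (Equiv.Perm N)).inf' univ_nonempty
          (fun σ => ∑ a, V i (σ (π₀ a)) a) ≤
        (1 / (Fintype.card N : ℝ)) * ∑ a, ∑ j, V i j a := by
  intro i π₀
  set m : ℝ := (Fintype.card (Equiv.Perm N) : ℝ) with hm
  set n : ℝ := (Fintype.card N : ℝ) with hn
  have hmpos : (0 : ℝ) < m := by
    simp [hm, Fintype.card_pos]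
  have hnpos : (0 : ℝ) < n := by
    simp [hn, Fintype.card_pos]
  set L : ℝ := (univ : Finset (Equiv.Perm N)).inf' univ_nonempty
      (fun σ => ∑ a, V i (σ (π₀ a)) a) with hL
  -- m • L ≤ ∑_σ f σ
  have h1 : m * L ≤ ∑ σ : Equiv.Perm N, ∑ a, V i (σ (π₀ a)) a := by
    have := Finset.card_nsmul_le_sum (univ : Finset (Equiv.Perm N))
      (fun σ => ∑ a, V i (σ (π₀ a)) a) L
      (fun σ _ => Finset.inf'_le _ (Finset.mem_univ σ))
    simpa [Finset.card_univ, nsmul_eq_mul, hm] using this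
  have h2 : n * ∑ σ : Equiv.Perm N, ∑ a, V i (σ (π₀ a)) a =
      m * ∑ a, ∑ j, V i j a := by
    rw [Finset.sum_comm, Finset.mul_sum, Finset.mul_sum]
    exact Finset.sum_congr rfl fun a _ => perm_point_sum (fun j => V i j a) (π₀ a)
  -- combine
  have h3 : n * (m * L) ≤ m * ∑ a, ∑ j, V i j a := by
    calc n * (m * L) ≤ n * ∑ σ : Equiv.Perm N, ∑ a, V i (σ (π₀ a)) a :=
          mul_le_mul_of_nonneg_left h1 hnpos.le
      _ = m * ∑ a, ∑ j, V i j a := h2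
  have h4 : n * L ≤ ∑ a, ∑ j, V i j a := by
    have h5 : m * (n * L) ≤ m * ∑ a, ∑ j, V i j a := by linarith [h3, mul_comm n (m * L)]
    exact (mul_le_mul_iff_right₀ hmpos).mp h5
  rw [one_div, inv_mul_eq_div, le_div_iff₀ hnpos]
  linarith [h4, mul_comm L n]
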